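/- Let M be a maximal independent set of the Kneser graph Γ₄ on chambers of PG(4,q) for which Case A holds. Let σ be a plane and let Y be the set of all chambers (P,ℓ,π,S) of M such that the coflag (ℓ,π) has M-weight at most two and P ≤ σ. Then |Y| ≤ 6q⁵+12q⁴+8q³+4q². -/

import Mathlib

set_option linter.unusedSectionVars false
set_option maxHeartbeats 1600000


/-- A chamber of `PG(4,q)`: a point, line, plane and solid of the projective space
(identified with linear subspaces of `F⁵` of linear dimension 1, 2, 3, 4), mutually incident. -/
structure Chamber4 (F : Type) [Field F] where
  pt : Submodule F (Fin 5 → F)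
  line : Submodule F (Fin 5 → F)
  plane : Submodule F (Fin 5 → F)
  solid : Submodule F (Fin 5 → F)
  dim_pt : Module.finrank F ↥pt = 1
  dim_line : Module.finrank F ↥line = 2
  dim_plane : Module.finrank F ↥plane = 3
  dim_solid : Module.finrank F ↥solid = 4
  le_pt_line : pt ≤ line
  le_line_plane : line ≤ plane
  le_plane_solid : plane ≤ solid

/-- Two chambers of `PG(4,q)` are opposite. -/
def Opp4 {F : Type} [Field F] (C D : Chamber4 F) : Prop :=
  C.pt ⊓ D.solid = ⊥ ∧ D.pt ⊓ C.solid = ⊥ ∧ C.line ⊓ D.plane = ⊥ ∧ D.line ⊓ C.plane = ⊥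

/-- An independent set of the Kneser graph `Γ₄` on chambers of `PG(4,q)`:
a set of pairwise non-opposite chambers. -/
def Indep4 {F : Type} [Field F] (M : Set (Chamber4 F)) : Prop :=
  ∀ C ∈ M, ∀ D ∈ M, ¬ Opp4 C D

/-- A maximal independent set of `Γ₄`: independent, and every chamber opposite to
no chamber of `M` belongs to `M`. -/
def MaxIndep4 {F : Type} [Field F] (M : Set (Chamber4 F)) : Prop :=
  Indep4 M ∧ ∀ C : Chamber4 F, (∀ D ∈ M, ¬ Opp4 C D) → C ∈ M

/-- A coflag of `PG(4,q)`: an incident line–plane pair. -/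
def IsCoflag4 {F : Type} [Field F] (l π : Submodule F (Fin 5 → F)) : Prop :=
  Module.finrank F ↥l = 2 ∧ Module.finrank F ↥π = 3 ∧ l ≤ π

/-- Two coflags `(l₁,π₁)` and `(l₂,π₂)` are f-opposite. -/
def FOpp4 {F : Type} [Field F] (l₁ π₁ l₂ π₂ : Submodule F (Fin 5 → F)) : Prop :=
  l₁ ⊓ π₂ = ⊥ ∧ l₂ ⊓ π₁ = ⊥

/-- `(l,π)` is an `M`-coflag: it occurs in some chamber of `M`. -/
def IsMCoflag {F : Type} [Field F] (M : Set (Chamber4 F)) (l π : Submodule F (Fin 5 → F)) :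
    Prop :=
  ∃ C ∈ M, C.line = l ∧ C.plane = π

/-- The `M`-weight of the coflag `(l,π)`: the number of chambers of `M` containing it. -/
noncomputable def weight4 {F : Type} [Field F] (M : Set (Chamber4 F)) (l π : Submodule F (Fin 5 → F)) : ℕ :=
  Set.ncard {C | C ∈ M ∧ C.line = l ∧ C.plane = π}

/-- Case B for `M`: the number of `M`-coflags of `M`-weight `(q+1)²` is at most
`4q⁴+9q³+4q²+q+1`. -/
def CaseB (q : ℕ) {F : Type} [Field F] (M : Set (Chamber4 F)) : Prop :=
  Set.ncard {p : Submodule F (Fin 5 → F) × Submodule F (Fin 5 → F) |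
      IsMCoflag M p.1 p.2 ∧ weight4 M p.1 p.2 = (q+1)^2} ≤ 4*q^4+9*q^3+4*q^2+q+1

/-- Case A1 for `M` with witness point `P₀`: every coflag whose line contains `P₀` has
`M`-weight `(q+1)²`, and every `M`-coflag of `M`-weight `< (q+1)²` has its plane
containing `P₀` and its line not containing `P₀`. -/
def CaseA1 (q : ℕ) {F : Type} [Field F] (M : Set (Chamber4 F))
    (P₀ : Submodule F (Fin 5 → F)) : Prop :=
  Module.finrank F ↥P₀ = 1 ∧
  (∀ l π : Submodule F (Fin 5 → F), IsCoflag4 l π → P₀ ≤ l → weight4 M l π = (q+1)^2) ∧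
  (∀ l π : Submodule F (Fin 5 → F), IsMCoflag M l π → weight4 M l π < (q+1)^2 →
    P₀ ≤ π ∧ ¬ P₀ ≤ l)

/-- Case A2 for `M` with witness solid `S₀`: every coflag whose plane lies in `S₀` has
`M`-weight `(q+1)²`, and every `M`-coflag of `M`-weight `< (q+1)²` has its line
contained in `S₀` and its plane not contained in `S₀`. -/
def CaseA2 (q : ℕ) {F : Type} [Field F] (M : Set (Chamber4 F))
    (S₀ : Submodule F (Fin 5 → F)) : Prop :=
  Module.finrank F ↥S₀ = 4 ∧
  (∀ l π : Submodule F (Fin 5 → F), IsCoflag4 l π → π ≤ S₀ → weight4 M l π = (q+1)^2) ∧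
  (∀ l π : Submodule F (Fin 5 → F), IsMCoflag M l π → weight4 M l π < (q+1)^2 →
    l ≤ S₀ ∧ ¬ π ≤ S₀)

/-- Case A for `M`. -/
def CaseA (q : ℕ) {F : Type} [Field F] (M : Set (Chamber4 F)) : Prop :=
  (∃ P₀, CaseA1 q M P₀) ∨ (∃ S₀, CaseA2 q M S₀)

open Module Submodule Set

variable {F : Type} [Field F] [Fintype F]

lemma eq_bot_of_lt_rank1 {Z W : Submodule F (Fin 5 → F)} (h : W < Z)
    (hZ : finrank F Z = 1) : W = ⊥ := by
  have h1 : finrank F W < 1 := hZ ▸ Submodule.finrank_lt_finrank_of_lt h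
  have : finrank F W = 0 := by omega
  exact Submodule.finrank_eq_zero.mp this

lemma rank1_le {X W : Submodule F (Fin 5 → F)} (hX : finrank F X = 1)
    (h : X ⊓ W ≠ ⊥) : X ≤ W := by
  rcases lt_or_eq_of_le (inf_le_left : X ⊓ W ≤ X) with hlt | heq
  · exact absurd (eq_bot_of_lt_rank1 hlt hX) h
  · rw [← heq]; exact inf_le_right

lemma inf_span_eq_bot {p : Submodule F (Fin 5 → F)} {v : Fin 5 → F} (hv : v ∉ p) :
    p ⊓ Submodule.span F {v} = ⊥ := by
  rw [eq_bot_iff]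
  rintro x ⟨hxp, hxs⟩
  rcases Submodule.mem_span_singleton.mp hxs with ⟨c, rfl⟩
  rcases eq_or_ne c 0 with rfl | hc
  · simp
  · have := p.smul_mem c⁻¹ hxp
    rw [smul_smul, inv_mul_cancel₀ hc, one_smul] at this
    exact absurd this hv

lemma finrank_sup_span {p : Submodule F (Fin 5 → F)} {v : Fin 5 → F} (hv : v ∉ p)
    (hv0 : v ≠ 0) :
    finrank F ↥(p ⊔ Submodule.span F {v}) = finrank F p + 1 := by
  have := Submodule.finrank_sup_add_finrank_inf_eq p (Submodule.span F {v})
  rw [inf_span_eq_bot hv, finrank_bot, finrank_span_singleton hv0] at this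
  omega

lemma nat_card_eq_mul' {D T : Type*} [Finite D] [Finite T] (g : D → T) (c : ℕ)
    (h : ∀ t, Nat.card {d // g d = t} = c) : Nat.card D = Nat.card T * c := by
  classical
  haveI := Fintype.ofFinite D; haveI := Fintype.ofFinite T
  rw [← Nat.card_congr (Equiv.sigmaFiberEquiv g)]
  rw [Nat.card_eq_fintype_card, Fintype.card_sigma, Nat.card_eq_fintype_card]
  have : ∀ t : T, Fintype.card {d // g d = t} = c := by
    intro t; rw [← h t, Nat.card_eq_fintype_card]
  simp [this, Finset.sum_const, Finset.card_univ, Nat.smul_one_eq_cast]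
lemma card_submodule' (q : ℕ) (hq : Fintype.card F = q) (X : Submodule F (Fin 5 → F)) :
    Nat.card X = q ^ finrank F X := by
  haveI : Fintype X := Fintype.ofFinite X
  rw [Nat.card_eq_fintype_card, card_eq_pow_finrank (K := F), hq]

instance : Finite (Submodule F (Fin 5 → F)) :=
  Finite.of_injective (fun p => (p : Set (Fin 5 → F))) SetLike.coe_injective

lemma ncard_mem_diff (q : ℕ) (hq : Fintype.card F = q) {A B : Submodule F (Fin 5 → F)}
    (h : A ≤ B) :
    Nat.card {v : Fin 5 → F // v ∈ B ∧ v ∉ A} = q ^ finrank F B - q ^ finrank F A := by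
  have e : {v : Fin 5 → F // v ∈ B ∧ v ∉ A} ≃ ↥((B : Set (Fin 5 → F)) \ (A : Set (Fin 5 → F))) :=
    Equiv.subtypeEquivRight (by intro v; simp [Set.mem_diff])
  rw [Nat.card_congr e, Nat.card_coe_set_eq]
  rw [Set.ncard_diff (by exact_mod_cast h)]
  have h1 : (B : Set (Fin 5 → F)).ncard = Nat.card B := (Nat.card_coe_set_eq _).symm
  have h2 : (A : Set (Fin 5 → F)).ncard = Nat.card A := (Nat.card_coe_set_eq _).symm
  rw [h1, h2, card_submodule' q hq, card_submodule' q hq]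

lemma fibG (q : ℕ) (hq : Fintype.card F = q) (p A B : Submodule F (Fin 5 → F))
    (hpA : p ≤ A) (hAB : A ≤ B) :
    Nat.card {X : Submodule F (Fin 5 → F) //
        p ≤ X ∧ X ≤ B ∧ ¬ X ≤ A ∧ finrank F X = finrank F p + 1}
      * (q ^ (finrank F p + 1) - q ^ finrank F p)
    = q ^ finrank F B - q ^ finrank F A := by
  classical
  set k := finrank F p with hk
  have hv0 : ∀ v : Fin 5 → F, v ∉ A → v ≠ 0 := fun v hv h0 => hv (h0 ▸ A.zero_mem)
  have key : ∀ v : Fin 5 → F, v ∈ B → v ∉ A →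
      p ≤ p ⊔ Submodule.span F {v} ∧ p ⊔ Submodule.span F {v} ≤ B ∧
        ¬ (p ⊔ Submodule.span F {v}) ≤ A ∧ finrank F ↥(p ⊔ Submodule.span F {v}) = k + 1 := by
    intro v hvB hvA
    refine ⟨le_sup_left, sup_le (hpA.trans hAB)
      ((Submodule.span_singleton_le_iff_mem _ _).2 hvB), ?_, ?_⟩
    · intro hle
      exact hvA (hle (Submodule.mem_sup_right (Submodule.mem_span_singleton_self v)))
    · exact finrank_sup_span (fun hvp => hvA (hpA hvp)) (hv0 v hvA)
  let T := {X : Submodule F (Fin 5 → F) // p ≤ X ∧ X ≤ B ∧ ¬ X ≤ A ∧ finrank F X = k + 1}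
  let D := {v : Fin 5 → F // v ∈ B ∧ v ∉ A}
  let g : D → T := fun v => ⟨p ⊔ Submodule.span F {v.1}, key v.1 v.2.1 v.2.2⟩
  have huniq : ∀ (X : T) (v : Fin 5 → F), v ∈ X.1 → v ∉ A → p ⊔ Submodule.span F {v} = X.1 := by
    intro X v hvX hvA
    apply Submodule.eq_of_le_of_finrank_le
      (sup_le X.2.1 ((Submodule.span_singleton_le_iff_mem _ _).2 hvX))
    rw [X.2.2.2.2, (key v (X.2.2.1 hvX) hvA).2.2.2]
  have hinfA : ∀ X : T, X.1 ⊓ A = p := by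
    intro X
    have h1 : p ≤ X.1 ⊓ A := le_inf X.2.1 hpA
    have h2 : X.1 ⊓ A < X.1 := by
      rcases lt_or_eq_of_le (inf_le_left : X.1 ⊓ A ≤ X.1) with hlt | heq
      · exact hlt
      · exfalso; apply X.2.2.2.1; rw [← heq]; exact inf_le_right
    have h3 : finrank F ↥(X.1 ⊓ A) < k + 1 := by
      have h4 := Submodule.finrank_lt_finrank_of_lt h2
      rw [X.2.2.2.2] at h4; exact h4
    exact (Submodule.eq_of_le_of_finrank_le h1 (by omega)).symm
  have hfib : ∀ X : T, Nat.card {d // g d = X} = q ^ (k + 1) - q ^ k := by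
    intro X
    have e : {d // g d = X} ≃ {v : Fin 5 → F // v ∈ X.1 ∧ v ∉ A} := by
      refine ⟨fun d => ⟨d.1.1, ?_, d.1.2.2⟩, fun v => ⟨⟨v.1, X.2.2.1 v.2.1, v.2.2⟩,
        Subtype.ext (huniq X v.1 v.2.1 v.2.2)⟩, ?_, ?_⟩
      · have hm : d.1.1 ∈ (g d.1).1 :=
          Submodule.mem_sup_right (Submodule.mem_span_singleton_self _)
        rwa [d.2] at hm
      · intro d; ext1; ext1; rfl
      · intro v; ext1; rfl
    rw [Nat.card_congr e]
    have e2 : {v : Fin 5 → F // v ∈ X.1 ∧ v ∉ A} ≃ {v : Fin 5 → F // v ∈ X.1 ∧ v ∉ p} := by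
      refine Equiv.subtypeEquivRight (fun v => ?_)
      constructor
      · rintro ⟨h1, h2⟩; exact ⟨h1, fun hp => h2 (hpA hp)⟩
      · rintro ⟨h1, h2⟩
        refine ⟨h1, fun hA => h2 ?_⟩
        have : v ∈ X.1 ⊓ A := ⟨h1, hA⟩
        rwa [hinfA X] at this
    rw [Nat.card_congr e2, ncard_mem_diff q hq X.2.1, X.2.2.2.2]
  have main := nat_card_eq_mul' g (q ^ (k + 1) - q ^ k) hfib
  rw [ncard_mem_diff q hq hAB] at main
  exact main.symm
section Counts
variable (q : ℕ)

lemma count_up (hq : Fintype.card F = q) (p A B : Submodule F (Fin 5 → F))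
    (hpA : p ≤ A) (hAB : A ≤ B) (t : ℕ)
    (hpos : 0 < q ^ (finrank F p + 1) - q ^ finrank F p)
    (ht : t * (q ^ (finrank F p + 1) - q ^ finrank F p) = q ^ finrank F B - q ^ finrank F A) :
    {X : Submodule F (Fin 5 → F) | p ≤ X ∧ X ≤ B ∧ ¬ X ≤ A ∧
      finrank F X = finrank F p + 1}.ncard = t := by
  have h := fibG q hq p A B hpA hAB
  have hcard : {X : Submodule F (Fin 5 → F) | p ≤ X ∧ X ≤ B ∧ ¬ X ≤ A ∧
      finrank F X = finrank F p + 1}.ncard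
      = Nat.card {X : Submodule F (Fin 5 → F) //
        p ≤ X ∧ X ≤ B ∧ ¬ X ≤ A ∧ finrank F X = finrank F p + 1} :=
    Nat.card_coe_set_eq _ |>.symm
  rw [hcard]
  exact Nat.eq_of_mul_eq_mul_right hpos (h.trans ht.symm)

lemma pow_sub_pos (hq2 : 2 ≤ q) (k : ℕ) : 0 < q ^ (k + 1) - q ^ k :=
  Nat.sub_pos_of_lt (Nat.pow_lt_pow_right (by omega) (by omega))

-- points of a subspace, possibly avoiding a smaller subspace
lemma cnt_points_notin (hq : Fintype.card F = q) (hq2 : 2 ≤ q)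
    {A B : Submodule F (Fin 5 → F)} (hAB : A ≤ B) (t : ℕ)
    (ht : t * (q - 1) = q ^ finrank F B - q ^ finrank F A) :
    {X : Submodule F (Fin 5 → F) | X ≤ B ∧ ¬ X ≤ A ∧ finrank F X = 1}.ncard = t := by
  have hset : {X : Submodule F (Fin 5 → F) | X ≤ B ∧ ¬ X ≤ A ∧ finrank F X = 1}
      = {X : Submodule F (Fin 5 → F) | (⊥ : Submodule F (Fin 5 → F)) ≤ X ∧ X ≤ B ∧ ¬ X ≤ A ∧
          finrank F X = finrank F (⊥ : Submodule F (Fin 5 → F)) + 1} := by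
    ext X
    simp only [Set.mem_setOf_eq, bot_le, true_and, finrank_bot, zero_add]
  rw [hset]
  refine count_up q hq ⊥ A B bot_le hAB t ?_ ?_
  · rw [finrank_bot]; simpa using pow_sub_pos q hq2 0
  · rw [finrank_bot]; simpa using ht

lemma cnt_points (hq : Fintype.card F = q) (hq2 : 2 ≤ q)
    (B : Submodule F (Fin 5 → F)) (t : ℕ)
    (ht : t * (q - 1) = q ^ finrank F B - 1) :
    {X : Submodule F (Fin 5 → F) | X ≤ B ∧ finrank F X = 1}.ncard = t := by
  have hset : {X : Submodule F (Fin 5 → F) | X ≤ B ∧ finrank F X = 1}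
      = {X : Submodule F (Fin 5 → F) | X ≤ B ∧ ¬ X ≤ (⊥ : Submodule F (Fin 5 → F)) ∧
          finrank F X = 1} := by
    ext X
    simp only [Set.mem_setOf_eq, le_bot_iff]
    constructor
    · rintro ⟨h1, h2⟩
      refine ⟨h1, fun hb => ?_, h2⟩
      rw [hb, finrank_bot] at h2; omega
    · tauto
  rw [hset]
  refine cnt_points_notin q hq hq2 bot_le t ?_
  rw [finrank_bot, pow_zero]; exact ht

-- subspaces one dimension above p, inside B (p ≤ B)
lemma cnt_over (hq : Fintype.card F = q) (hq2 : 2 ≤ q)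
    {p B : Submodule F (Fin 5 → F)} (hpB : p ≤ B) (t : ℕ)
    (ht : t * (q ^ (finrank F p + 1) - q ^ finrank F p)
      = q ^ finrank F B - q ^ finrank F p) :
    {X : Submodule F (Fin 5 → F) | p ≤ X ∧ X ≤ B ∧
      finrank F X = finrank F p + 1}.ncard = t := by
  have hset : {X : Submodule F (Fin 5 → F) | p ≤ X ∧ X ≤ B ∧ finrank F X = finrank F p + 1}
      = {X : Submodule F (Fin 5 → F) | p ≤ X ∧ X ≤ B ∧ ¬ X ≤ p ∧
          finrank F X = finrank F p + 1} := by
    ext X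
    simp only [Set.mem_setOf_eq]
    constructor
    · rintro ⟨h1, h2, h3⟩
      refine ⟨h1, h2, fun hp => ?_, h3⟩
      have := Submodule.finrank_mono hp
      omega
    · tauto
  rw [hset]
  exact count_up q hq p p B le_rfl hpB t (pow_sub_pos q hq2 _) ht

lemma cnt_over_notin (hq : Fintype.card F = q) (hq2 : 2 ≤ q)
    {p A B : Submodule F (Fin 5 → F)} (hpA : p ≤ A) (hAB : A ≤ B) (t : ℕ)
    (ht : t * (q ^ (finrank F p + 1) - q ^ finrank F p)
      = q ^ finrank F B - q ^ finrank F A) :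
    {X : Submodule F (Fin 5 → F) | p ≤ X ∧ X ≤ B ∧ ¬ X ≤ A ∧
      finrank F X = finrank F p + 1}.ncard = t :=
  count_up q hq p A B hpA hAB t (pow_sub_pos q hq2 _) ht

end Counts
section Counts2
variable (q : ℕ)

lemma cnt_lines_rank3 (hq : Fintype.card F = q) (hq2 : 2 ≤ q)
    (σ : Submodule F (Fin 5 → F)) (hσ : finrank F σ = 3) :
    {l : Submodule F (Fin 5 → F) | l ≤ σ ∧ finrank F l = 2}.ncard = q ^ 2 + q + 1 := by
  classical
  have hq1 : 1 ≤ q := by omega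
  set L := {l : Submodule F (Fin 5 → F) | l ≤ σ ∧ finrank F l = 2} with hL
  set P := {X : Submodule F (Fin 5 → F) | X ≤ σ ∧ finrank F X = 1} with hP
  let I := {pl : Submodule F (Fin 5 → F) × Submodule F (Fin 5 → F) //
      pl.1 ≤ pl.2 ∧ pl.2 ≤ σ ∧ finrank F pl.1 = 1 ∧ finrank F pl.2 = 2}
  let g1 : I → ↥L := fun d => ⟨d.1.2, d.2.2.1, d.2.2.2.2⟩
  have h1 : ∀ l : ↥L, Nat.card {d // g1 d = l} = q + 1 := by
    intro l
    have e : {d // g1 d = l} ≃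
        {X : Submodule F (Fin 5 → F) // X ≤ (l : Submodule F (Fin 5 → F)) ∧ finrank F X = 1} := by
      refine ⟨fun d => ⟨d.1.1.1, ?_, d.1.2.2.2.1⟩,
        fun X => ⟨⟨(X.1, (l : Submodule F (Fin 5 → F))), X.2.1, l.2.1, X.2.2, l.2.2⟩,
          Subtype.ext rfl⟩, ?_, ?_⟩
      · have h := d.1.2.1
        have hval : d.1.1.2 = (l : Submodule F (Fin 5 → F)) := congrArg Subtype.val d.2
        rwa [hval] at h
      · intro d
        apply Subtype.ext
        apply Subtype.ext
        have hval : d.1.1.2 = (l : Submodule F (Fin 5 → F)) := congrArg Subtype.val d.2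
        exact Prod.ext rfl hval.symm
      · intro X; rfl
    rw [Nat.card_congr e]
    have harith : (q + 1) * (q - 1) = q ^ finrank F ↥(l : Submodule F (Fin 5 → F)) - 1 := by
      rw [l.2.2]
      have h2 : 1 ≤ q ^ 2 := Nat.one_le_pow _ _ (by omega)
      zify [hq1, h2]
      ring
    have hres := cnt_points (F := F) q hq hq2 (l : Submodule F (Fin 5 → F)) (q + 1) harith
    exact (Nat.card_coe_set_eq _).trans hres
  let g2 : I → ↥P := fun d => ⟨d.1.1, d.2.1.trans d.2.2.1, d.2.2.2.1⟩
  have h2 : ∀ X : ↥P, Nat.card {d // g2 d = X} = q + 1 := by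
    intro X
    have e : {d // g2 d = X} ≃
        {l' : Submodule F (Fin 5 → F) // (X : Submodule F (Fin 5 → F)) ≤ l' ∧ l' ≤ σ ∧
          finrank F l' = 2} := by
      refine ⟨fun d => ⟨d.1.1.2, ?_, d.1.2.2.1, d.1.2.2.2.2⟩,
        fun l' => ⟨⟨((X : Submodule F (Fin 5 → F)), l'.1), l'.2.1, l'.2.2.1, X.2.2, l'.2.2.2⟩,
          Subtype.ext rfl⟩, ?_, ?_⟩
      · have h := d.1.2.1
        have hval : d.1.1.1 = (X : Submodule F (Fin 5 → F)) := congrArg Subtype.val d.2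
        rwa [hval] at h
      · intro d
        apply Subtype.ext; apply Subtype.ext
        have hval : d.1.1.1 = (X : Submodule F (Fin 5 → F)) := congrArg Subtype.val d.2
        exact Prod.ext hval.symm rfl
      · intro l'; rfl
    rw [Nat.card_congr e]
    have harith : (q + 1) * (q ^ (finrank F ↥(X : Submodule F (Fin 5 → F)) + 1)
        - q ^ finrank F ↥(X : Submodule F (Fin 5 → F))) = q ^ finrank F σ
        - q ^ finrank F ↥(X : Submodule F (Fin 5 → F)) := by
      rw [X.2.2, hσ]
      have hle : q ^ 1 ≤ q ^ 2 := Nat.pow_le_pow_right (by omega) (by omega)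
      have hle2 : q ^ 1 ≤ q ^ 3 := Nat.pow_le_pow_right (by omega) (by omega)
      zify [hle, hle2]
      ring
    have hres := cnt_over (F := F) q hq hq2 (p := (X : Submodule F (Fin 5 → F))) (B := σ)
      (X.2.1) (q + 1) harith
    have e2 : {l' : Submodule F (Fin 5 → F) // (X : Submodule F (Fin 5 → F)) ≤ l' ∧ l' ≤ σ ∧
        finrank F l' = 2}
        ≃ {l' : Submodule F (Fin 5 → F) // (X : Submodule F (Fin 5 → F)) ≤ l' ∧ l' ≤ σ ∧
          finrank F l' = finrank F ↥(X : Submodule F (Fin 5 → F)) + 1} :=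
      Equiv.subtypeEquivRight (by intro l'; rw [X.2.2])
    rw [Nat.card_congr e2]
    exact (Nat.card_coe_set_eq _).trans hres
  have c1 := nat_card_eq_mul' g1 (q + 1) h1
  have c2 := nat_card_eq_mul' g2 (q + 1) h2
  have hPcard : Nat.card ↥P = q ^ 2 + q + 1 := by
    refine (Nat.card_coe_set_eq _).trans (cnt_points (F := F) q hq hq2 σ _ ?_)
    rw [hσ]
    have h3 : 1 ≤ q ^ 3 := Nat.one_le_pow _ _ (by omega)
    zify [hq1, h3]
    ring
  have : Nat.card ↥L * (q + 1) = (q ^ 2 + q + 1) * (q + 1) := by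
    rw [← c1, c2, hPcard]
  have hfin := Nat.eq_of_mul_eq_mul_right (show 0 < q + 1 by omega) this
  exact (Nat.card_coe_set_eq _).symm.trans hfin

lemma cnt_skew (hq : Fintype.card F = q) (hq2 : 2 ≤ q)
    {S₀ l' Z : Submodule F (Fin 5 → F)} (hS : finrank F S₀ = 4) (hl' : finrank F l' = 2)
    (hl'S : l' ≤ S₀) (hZ : finrank F Z = 1) (hZS : Z ≤ S₀) :
    {l'' : Submodule F (Fin 5 → F) | Z ≤ l'' ∧ l'' ≤ S₀ ∧ finrank F l'' = 2 ∧
      l'' ⊓ l' = ⊥}.ncard ≤ q ^ 2 := by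
  classical
  by_cases hZl : Z ≤ l'
  · have hempty : {l'' : Submodule F (Fin 5 → F) | Z ≤ l'' ∧ l'' ≤ S₀ ∧ finrank F l'' = 2 ∧
        l'' ⊓ l' = ⊥} = ∅ := by
      ext l''
      simp only [Set.mem_setOf_eq, Set.mem_empty_iff_false, iff_false, not_and]
      intro h1 _ _ h4
      have : Z ≤ l'' ⊓ l' := le_inf h1 hZl
      rw [h4, le_bot_iff] at this
      rw [this, finrank_bot] at hZ
      omega
    rw [hempty, Set.ncard_empty]
    exact Nat.zero_le _
  · have hZl'bot : l' ⊓ Z = ⊥ := by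
      rcases lt_or_eq_of_le (inf_le_right : l' ⊓ Z ≤ Z) with hlt | heq
      · exact eq_bot_of_lt_rank1 hlt hZ
      · exact absurd (heq ▸ (inf_le_left : l' ⊓ Z ≤ l')) hZl
    have hsup3 : finrank F ↥(l' ⊔ Z) = 3 := by
      have := Submodule.finrank_sup_add_finrank_inf_eq l' Z
      rw [hZl'bot, finrank_bot, hl', hZ] at this
      omega
    have hlt : l' ⊔ Z < S₀ := by
      refine lt_of_le_of_ne (sup_le hl'S hZS) (fun h => ?_)
      rw [h, hS] at hsup3; omega
    obtain ⟨u, huS, hu⟩ := SetLike.exists_of_lt hlt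
    have hu0 : u ≠ 0 := fun h => hu (h ▸ (l' ⊔ Z).zero_mem)
    have hul' : u ∉ l' := fun h => hu (Submodule.mem_sup_left h)
    set h₀ := l' ⊔ Submodule.span F {u} with hh₀
    have hh3 : finrank F ↥h₀ = 3 := by
      rw [hh₀, finrank_sup_span hul' hu0, hl']
    have hl'h₀ : l' ≤ h₀ := le_sup_left
    have hh₀S : h₀ ≤ S₀ := sup_le hl'S ((Submodule.span_singleton_le_iff_mem _ _).2 huS)
    have hZh₀ : ¬ Z ≤ h₀ := by
      intro h
      have h1 : l' ⊔ Z ≤ h₀ := sup_le hl'h₀ h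
      have h2 : l' ⊔ Z = h₀ := Submodule.eq_of_le_of_finrank_le h1 (by omega)
      exact hu (h2 ▸ Submodule.mem_sup_right (Submodule.mem_span_singleton_self u))
    have hZh₀bot : Z ⊓ h₀ = ⊥ := by
      rcases lt_or_eq_of_le (inf_le_left : Z ⊓ h₀ ≤ Z) with hlt' | heq
      · exact eq_bot_of_lt_rank1 hlt' hZ
      · exact absurd (heq ▸ (inf_le_right : Z ⊓ h₀ ≤ h₀)) hZh₀
    -- target set
    have htarget : {W : Submodule F (Fin 5 → F) | W ≤ h₀ ∧ ¬ W ≤ l' ∧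
        finrank F W = 1}.ncard = q ^ 2 := by
      refine cnt_points_notin q hq hq2 hl'h₀ _ ?_
      rw [hh3, hl']
      have hle : q ^ 2 ≤ q ^ 3 := Nat.pow_le_pow_right (by omega) (by omega)
      zify [hle, show 1 ≤ q by omega]
      ring
    rw [← htarget]
    refine Set.ncard_le_ncard_of_injOn (fun l'' => l'' ⊓ h₀) ?_ ?_ (Set.toFinite _)
    · rintro l'' ⟨h1, h2, h3, h4⟩
      have hsup4 : finrank F ↥(l'' ⊔ h₀) = 4 := by
        have hle4 : finrank F ↥(l'' ⊔ h₀) ≤ 4 := hS ▸ Submodule.finrank_mono (sup_le h2 hh₀S)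
        have hge : h₀ ≤ l'' ⊔ h₀ := le_sup_right
        rcases lt_or_eq_of_le hge with hlt' | heq
        · have := Submodule.finrank_lt_finrank_of_lt hlt'
          omega
        · exfalso
          apply hZh₀
          exact h1.trans (heq ▸ (le_sup_left : l'' ≤ l'' ⊔ h₀))
      have hinf1 : finrank F ↥(l'' ⊓ h₀) = 1 := by
        have := Submodule.finrank_sup_add_finrank_inf_eq l'' h₀
        rw [h3, hh3, hsup4] at this
        omega
      refine ⟨inf_le_right, ?_, hinf1⟩
      intro hWl'
      have : l'' ⊓ h₀ ≤ l'' ⊓ l' := le_inf inf_le_left hWl'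
      rw [h4, le_bot_iff] at this
      rw [this, finrank_bot] at hinf1
      omega
    · rintro l₁ ⟨h11, h12, h13, h14⟩ l₂ ⟨h21, h22, h23, h24⟩ heq
      have key : ∀ l'' : Submodule F (Fin 5 → F), Z ≤ l'' → l'' ≤ S₀ → finrank F l'' = 2 →
          l'' ⊓ l' = ⊥ → finrank F ↥(l'' ⊓ h₀) = 1 → l'' = Z ⊔ (l'' ⊓ h₀) := by
        intro l'' k1 k2 k3 k4 k5
        have hZW : Z ⊓ (l'' ⊓ h₀) = ⊥ := by
          rw [eq_bot_iff]
          intro x hx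
          have : x ∈ Z ⊓ h₀ := ⟨hx.1, hx.2.2⟩
          rwa [hZh₀bot] at this
        have hfr : finrank F ↥(Z ⊔ (l'' ⊓ h₀)) = 2 := by
          have := Submodule.finrank_sup_add_finrank_inf_eq Z (l'' ⊓ h₀)
          rw [hZW, finrank_bot, hZ, k5] at this
          omega
        exact (Submodule.eq_of_le_of_finrank_le (sup_le k1 inf_le_left) (by omega)).symm
      have hfr1 : finrank F ↥(l₁ ⊓ h₀) = 1 := by
        -- recompute as in mapsTo
        have hsup4 : finrank F ↥(l₁ ⊔ h₀) = 4 := by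
          have hle4 : finrank F ↥(l₁ ⊔ h₀) ≤ 4 := hS ▸ Submodule.finrank_mono (sup_le h12 hh₀S)
          rcases lt_or_eq_of_le (le_sup_right : h₀ ≤ l₁ ⊔ h₀) with hlt' | heq'
          · have := Submodule.finrank_lt_finrank_of_lt hlt'
            omega
          · exact absurd (h11.trans (heq' ▸ (le_sup_left : l₁ ≤ l₁ ⊔ h₀))) hZh₀
        have := Submodule.finrank_sup_add_finrank_inf_eq l₁ h₀
        rw [h13, hh3, hsup4] at this
        omega
      have hfr2 : finrank F ↥(l₂ ⊓ h₀) = 1 := by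
        have hsup4 : finrank F ↥(l₂ ⊔ h₀) = 4 := by
          have hle4 : finrank F ↥(l₂ ⊔ h₀) ≤ 4 := hS ▸ Submodule.finrank_mono (sup_le h22 hh₀S)
          rcases lt_or_eq_of_le (le_sup_right : h₀ ≤ l₂ ⊔ h₀) with hlt' | heq'
          · have := Submodule.finrank_lt_finrank_of_lt hlt'
            omega
          · exact absurd (h21.trans (heq' ▸ (le_sup_left : l₂ ≤ l₂ ⊔ h₀))) hZh₀
        have := Submodule.finrank_sup_add_finrank_inf_eq l₂ h₀
        rw [h23, hh3, hsup4] at this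
        omega
      have heq' : l₁ ⊓ h₀ = l₂ ⊓ h₀ := heq
      rw [key l₁ h11 h12 h13 h14 hfr1, key l₂ h21 h22 h23 h24 hfr2, heq']

end Counts2
section PairCount

lemma filter_card_eq_ncard {α : Type*} [Finite α] (s : Set α) (p : α → Prop)
    [DecidablePred p] :
    ((Set.toFinite s).toFinset.filter p).card = {a | a ∈ s ∧ p a}.ncard := by
  rw [← Set.ncard_coe_finset]
  congr 1
  ext a
  simp [Set.Finite.mem_toFinset]

lemma ncard_le_mul_of_mapsTo {α β : Type*} [Finite α] [Finite β] {s : Set α} {t : Set β}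
    (f : α → β) (hm : Set.MapsTo f s t) (k : ℕ)
    (hf : ∀ b, {a | a ∈ s ∧ f a = b}.ncard ≤ k) : s.ncard ≤ k * t.ncard := by
  classical
  have hs := Set.toFinite s
  have ht := Set.toFinite t
  have h := Finset.card_le_mul_card_image_of_maps_to
    (f := f) (s := hs.toFinset) (t := ht.toFinset) ?_ k ?_
  · rwa [Set.ncard_eq_toFinset_card _ hs, Set.ncard_eq_toFinset_card _ ht]
  · intro a ha
    rw [Set.Finite.mem_toFinset] at *
    exact hm ha
  · intro b _
    rw [filter_card_eq_ncard]
    exact hf b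

lemma ncard_pair_le {α β : Type*} [Finite α] [Finite β] (s : Set (α × β)) (P : α → Prop)
    (Q : α → β → Prop) (hs : ∀ p ∈ s, P p.1 ∧ Q p.1 p.2) (n m : ℕ)
    (hP : {a | P a}.ncard ≤ n) (hQ : ∀ a, P a → {b | Q a b}.ncard ≤ m) :
    s.ncard ≤ n * m := by
  have h1 : s.ncard ≤ m * {a | P a}.ncard := by
    refine ncard_le_mul_of_mapsTo Prod.fst (fun p hp => (hs p hp).1) m ?_
    intro b
    rcases Set.eq_empty_or_nonempty {a | a ∈ s ∧ a.1 = b} with he | ⟨p₀, hp₀⟩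
    · rw [he, Set.ncard_empty]; exact Nat.zero_le _
    · have hPb : P b := by
        have := (hs p₀ hp₀.1).1
        rwa [hp₀.2] at this
      refine le_trans ?_ (hQ b hPb)
      refine Set.ncard_le_ncard_of_injOn Prod.snd ?_ ?_ (Set.toFinite _)
      · rintro p ⟨hps, hpb⟩
        have := (hs p hps).2
        rwa [hpb] at this
      · rintro p ⟨_, hp1⟩ r ⟨_, hr1⟩ h2
        exact Prod.ext (hp1.trans hr1.symm) h2
  calc s.ncard ≤ m * {a | P a}.ncard := h1
    _ ≤ m * n := Nat.mul_le_mul_left m hP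
    _ = n * m := Nat.mul_comm m n

lemma ncard_triple_le {α β γ : Type*} [Finite α] [Finite β] [Finite γ]
    (s : Set (α × β × γ)) (P : α → Prop) (Q : α → β → Prop) (R : α → β → γ → Prop)
    (hs : ∀ p ∈ s, P p.1 ∧ Q p.1 p.2.1 ∧ R p.1 p.2.1 p.2.2) (n m k : ℕ)
    (hP : {a | P a}.ncard ≤ n) (hQ : ∀ a, P a → {b | Q a b}.ncard ≤ m)
    (hR : ∀ a b, P a → Q a b → {c | R a b c}.ncard ≤ k) :
    s.ncard ≤ n * (m * k) := by
  refine ncard_pair_le s P (fun a p => Q a p.1 ∧ R a p.1 p.2) hs n (m * k) hP ?_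
  intro a hPa
  refine ncard_pair_le _ (Q a) (R a) (fun p hp => hp) m k (hQ a hPa) (hR a · hPa)

end PairCount

section Wrappers
variable {F : Type} [Field F] [Fintype F] (q : ℕ)

lemma frV : finrank F (Fin 5 → F) = 5 := by simp [Module.finrank_pi]

lemma w_pts2 (hq : Fintype.card F = q) (hq2 : 2 ≤ q) {W : Submodule F (Fin 5 → F)}
    (hW : finrank F W = 2) :
    {a : Submodule F (Fin 5 → F) | a ≤ W ∧ finrank F a = 1}.ncard = q + 1 := by
  refine cnt_points q hq hq2 W _ ?_
  rw [hW]
  have h2 : 1 ≤ q ^ 2 := Nat.one_le_pow _ _ (by omega)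
  zify [show 1 ≤ q by omega, h2]
  ring

lemma w_pts3 (hq : Fintype.card F = q) (hq2 : 2 ≤ q) {W : Submodule F (Fin 5 → F)}
    (hW : finrank F W = 3) :
    {a : Submodule F (Fin 5 → F) | a ≤ W ∧ finrank F a = 1}.ncard = q ^ 2 + q + 1 := by
  refine cnt_points q hq hq2 W _ ?_
  rw [hW]
  have h3 : 1 ≤ q ^ 3 := Nat.one_le_pow _ _ (by omega)
  zify [show 1 ≤ q by omega, h3]
  ring

lemma w_lines_over_in4 (hq : Fintype.card F = q) (hq2 : 2 ≤ q)
    {a S₀ : Submodule F (Fin 5 → F)} (ha : finrank F a = 1) (haS : a ≤ S₀)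
    (hS : finrank F S₀ = 4) :
    {b : Submodule F (Fin 5 → F) | a ≤ b ∧ b ≤ S₀ ∧ finrank F b = 2}.ncard
      = q ^ 2 + q + 1 := by
  have hset : {b : Submodule F (Fin 5 → F) | a ≤ b ∧ b ≤ S₀ ∧ finrank F b = 2}
      = {b : Submodule F (Fin 5 → F) | a ≤ b ∧ b ≤ S₀ ∧ finrank F b = finrank F a + 1} := by
    ext b; simp only [Set.mem_setOf_eq, ha]
  rw [hset]
  refine cnt_over q hq hq2 haS _ ?_
  rw [ha, hS]
  have h1 : q ^ 1 ≤ q ^ (1 + 1) := Nat.pow_le_pow_right (by omega) (by omega)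
  have h2 : q ^ 1 ≤ q ^ 4 := Nat.pow_le_pow_right (by omega) (by omega)
  zify [h1, h2]
  ring

lemma w_lines_over_top (hq : Fintype.card F = q) (hq2 : 2 ≤ q)
    {a : Submodule F (Fin 5 → F)} (ha : finrank F a = 1) :
    {b : Submodule F (Fin 5 → F) | a ≤ b ∧ finrank F b = 2}.ncard
      = q ^ 3 + q ^ 2 + q + 1 := by
  have hset : {b : Submodule F (Fin 5 → F) | a ≤ b ∧ finrank F b = 2}
      = {b : Submodule F (Fin 5 → F) | a ≤ b ∧ b ≤ (⊤ : Submodule F (Fin 5 → F)) ∧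
          finrank F b = finrank F a + 1} := by
    ext b; simp only [Set.mem_setOf_eq, le_top, true_and, ha]
  rw [hset]
  refine cnt_over q hq hq2 le_top _ ?_
  have htop : finrank F ↥(⊤ : Submodule F (Fin 5 → F)) = 5 := by
    rw [finrank_top]; exact frV
  rw [ha, htop]
  have h1 : q ^ 1 ≤ q ^ (1 + 1) := Nat.pow_le_pow_right (by omega) (by omega)
  have h2 : q ^ 1 ≤ q ^ 5 := Nat.pow_le_pow_right (by omega) (by omega)
  zify [h1, h2]
  ring

lemma w_planes_over_notin (hq : Fintype.card F = q) (hq2 : 2 ≤ q)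
    {b S₀ : Submodule F (Fin 5 → F)} (hb : finrank F b = 2) (hbS : b ≤ S₀)
    (hS : finrank F S₀ = 4) :
    {c : Submodule F (Fin 5 → F) | b ≤ c ∧ ¬ c ≤ S₀ ∧ finrank F c = 3}.ncard = q ^ 2 := by
  have hset : {c : Submodule F (Fin 5 → F) | b ≤ c ∧ ¬ c ≤ S₀ ∧ finrank F c = 3}
      = {c : Submodule F (Fin 5 → F) | b ≤ c ∧ c ≤ (⊤ : Submodule F (Fin 5 → F)) ∧
          ¬ c ≤ S₀ ∧ finrank F c = finrank F b + 1} := by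
    ext c; simp only [Set.mem_setOf_eq, le_top, true_and, hb]
  rw [hset]
  refine cnt_over_notin q hq hq2 hbS le_top _ ?_
  have htop : finrank F ↥(⊤ : Submodule F (Fin 5 → F)) = 5 := by
    rw [finrank_top]; exact frV
  rw [hb, hS, htop]
  have h1 : q ^ 2 ≤ q ^ (2 + 1) := Nat.pow_le_pow_right (by omega) (by omega)
  have h2 : q ^ 4 ≤ q ^ 5 := Nat.pow_le_pow_right (by omega) (by omega)
  zify [h1, h2]
  ring

end Wrappers
section ChamberAux
variable {F : Type} [Field F] [Fintype F]

instance : Finite (Chamber4 F) := by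
  refine Finite.of_injective
    (fun C : Chamber4 F => (C.pt, C.line, C.plane, C.solid)) ?_
  intro C D h
  cases C; cases D
  simp only [Prod.mk.injEq] at h
  obtain ⟨h1, h2, h3, h4⟩ := h
  subst h1; subst h2; subst h3; subst h4; rfl

lemma exists_point_rank1 {W : Submodule F (Fin 5 → F)} (h : W ≠ ⊥) :
    ∃ P : Submodule F (Fin 5 → F), P ≤ W ∧ finrank F P = 1 := by
  obtain ⟨v, hvW, hv0⟩ := Submodule.exists_mem_ne_zero_of_ne_bot h
  exact ⟨Submodule.span F {v}, (Submodule.span_singleton_le_iff_mem _ _).2 hvW,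
    finrank_span_singleton hv0⟩

lemma A2_inf_plane {S₀ : Submodule F (Fin 5 → F)} (C : Chamber4 F)
    (h1 : C.line ≤ S₀) (h2 : ¬ C.plane ≤ S₀) : C.plane ⊓ S₀ = C.line := by
  have hle : C.line ≤ C.plane ⊓ S₀ := le_inf C.le_line_plane h1
  have hlt : C.plane ⊓ S₀ < C.plane :=
    lt_of_le_of_ne inf_le_left (fun h => h2 (by rw [← h]; exact inf_le_right))
  have hfr := Submodule.finrank_lt_finrank_of_lt hlt
  rw [C.dim_plane] at hfr
  exact (Submodule.eq_of_le_of_finrank_le hle (by rw [C.dim_line]; omega)).symm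

lemma inf_rank2 {A B : Submodule F (Fin 5 → F)} (hA : finrank F A = 3)
    (hB : finrank F B = 4) (hnle : ¬ A ≤ B) : finrank F ↥(A ⊓ B) = 2 := by
  have hsup : finrank F ↥(A ⊔ B) ≤ 5 := by
    have h := Submodule.finrank_le (A ⊔ B)
    rwa [frV] at h
  have hform := Submodule.finrank_sup_add_finrank_inf_eq A B
  rw [hA, hB] at hform
  have hlt : A ⊓ B < A :=
    lt_of_le_of_ne inf_le_left (fun h => hnle (by rw [← h]; exact inf_le_right))
  have hfr := Submodule.finrank_lt_finrank_of_lt hlt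
  rw [hA] at hfr
  omega

lemma chamber_count3 {M : Set (Chamber4 F)} (s : Set (Chamber4 F))
    (hw : ∀ C ∈ s, C ∈ M ∧ weight4 M C.line C.plane ≤ 2)
    (g : Chamber4 F → Submodule F (Fin 5 → F))
    (P : Submodule F (Fin 5 → F) → Prop)
    (Q : Submodule F (Fin 5 → F) → Submodule F (Fin 5 → F) → Prop)
    (R : Submodule F (Fin 5 → F) → Submodule F (Fin 5 → F) → Submodule F (Fin 5 → F) → Prop)
    (hmem : ∀ C ∈ s, P (g C) ∧ Q (g C) C.line ∧ R (g C) C.line C.plane)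
    (n m k : ℕ) (hP : {a | P a}.ncard ≤ n) (hQ : ∀ a, P a → {b | Q a b}.ncard ≤ m)
    (hR : ∀ a b, P a → Q a b → {c | R a b c}.ncard ≤ k) :
    s.ncard ≤ 2 * (n * (m * k)) := by
  classical
  set T := {p : Submodule F (Fin 5 → F) × Submodule F (Fin 5 → F) × Submodule F (Fin 5 → F) |
    P p.1 ∧ Q p.1 p.2.1 ∧ R p.1 p.2.1 p.2.2} with hT
  have h1 : s.ncard ≤ 2 * T.ncard := by
    refine ncard_le_mul_of_mapsTo (fun C => (g C, C.line, C.plane)) ?_ 2 ?_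
    · intro C hC; exact hmem C hC
    · intro b
      show {a | a ∈ s ∧ (g a, a.line, a.plane) = b}.ncard ≤ 2
      rcases Set.eq_empty_or_nonempty {a | a ∈ s ∧ (g a, a.line, a.plane) = b}
        with he | ⟨C₀, hC₀⟩
      · rw [he, Set.ncard_empty]; omega
      · have hb1 : C₀.line = b.2.1 := by rw [← hC₀.2]
        have hb2 : C₀.plane = b.2.2 := by rw [← hC₀.2]
        have hsub : {a | a ∈ s ∧ (g a, a.line, a.plane) = b}
            ⊆ {D | D ∈ M ∧ D.line = b.2.1 ∧ D.plane = b.2.2} := by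
          rintro D ⟨hDs, hDb⟩
          exact ⟨(hw D hDs).1, by rw [← hDb], by rw [← hDb]⟩
        have hle := Set.ncard_le_ncard hsub (Set.toFinite _)
        have hwt : Set.ncard {D | D ∈ M ∧ D.line = b.2.1 ∧ D.plane = b.2.2} ≤ 2 := by
          have h2 := (hw C₀ hC₀.1).2
          rw [hb1, hb2] at h2
          exact h2
        exact le_trans hle hwt
  have h2 : T.ncard ≤ n * (m * k) := ncard_triple_le T P Q R (fun p hp => hp) n m k hP hQ hR
  calc s.ncard ≤ 2 * T.ncard := h1
    _ ≤ 2 * (n * (m * k)) := Nat.mul_le_mul_left 2 h2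

lemma chamber_count2 {M : Set (Chamber4 F)} (s : Set (Chamber4 F))
    (hw : ∀ C ∈ s, C ∈ M ∧ weight4 M C.line C.plane ≤ 2)
    (P : Submodule F (Fin 5 → F) → Prop)
    (Q : Submodule F (Fin 5 → F) → Submodule F (Fin 5 → F) → Prop)
    (hmem : ∀ C ∈ s, P C.line ∧ Q C.line C.plane)
    (n m : ℕ) (hP : {a | P a}.ncard ≤ n) (hQ : ∀ a, P a → {b | Q a b}.ncard ≤ m) :
    s.ncard ≤ 2 * (n * m) := by
  classical
  set T := {p : Submodule F (Fin 5 → F) × Submodule F (Fin 5 → F) |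
    P p.1 ∧ Q p.1 p.2} with hT
  have h1 : s.ncard ≤ 2 * T.ncard := by
    refine ncard_le_mul_of_mapsTo (fun C => (C.line, C.plane)) ?_ 2 ?_
    · intro C hC; exact hmem C hC
    · intro b
      show {a | a ∈ s ∧ (a.line, a.plane) = b}.ncard ≤ 2
      rcases Set.eq_empty_or_nonempty {a | a ∈ s ∧ (a.line, a.plane) = b}
        with he | ⟨C₀, hC₀⟩
      · rw [he, Set.ncard_empty]; omega
      · have hb1 : C₀.line = b.1 := by rw [← hC₀.2]
        have hb2 : C₀.plane = b.2 := by rw [← hC₀.2]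
        have hsub : {a | a ∈ s ∧ (a.line, a.plane) = b}
            ⊆ {D | D ∈ M ∧ D.line = b.1 ∧ D.plane = b.2} := by
          rintro D ⟨hDs, hDb⟩
          exact ⟨(hw D hDs).1, by rw [← hDb], by rw [← hDb]⟩
        have hle := Set.ncard_le_ncard hsub (Set.toFinite _)
        have hwt : Set.ncard {D | D ∈ M ∧ D.line = b.1 ∧ D.plane = b.2} ≤ 2 := by
          have h2 := (hw C₀ hC₀.1).2
          rw [hb1, hb2] at h2
          exact h2
        exact le_trans hle hwt
  have h2 : T.ncard ≤ n * m := ncard_pair_le T P Q (fun p hp => hp) n m hP hQ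
  calc s.ncard ≤ 2 * T.ncard := h1
    _ ≤ 2 * (n * m) := Nat.mul_le_mul_left 2 h2

end ChamberAux
lemma arith1 (q : ℕ) (h : 2 ≤ q) :
    2*((q^2+q+1)*(q^3+q^2+q+1)) ≤ 6*q^5+12*q^4+8*q^3+4*q^2 := by
  obtain ⟨r, rfl⟩ : ∃ r, q = r + 2 := ⟨q - 2, by omega⟩
  ring_nf
  linarith [Nat.zero_le r, Nat.zero_le (r^2), Nat.zero_le (r^3), Nat.zero_le (r^4), Nat.zero_le (r^5)]
lemma arith2 (q : ℕ) (h : 2 ≤ q) :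
    2*((q^2+q+1)*q^2) + (2*((q+1)*((q^2+q+1)*q^2)) + 2*(2*((q+1)*(q^2*q^2))))
      ≤ 6*q^5+12*q^4+8*q^3+4*q^2 := by
  obtain ⟨r, rfl⟩ : ∃ r, q = r + 2 := ⟨q - 2, by omega⟩
  ring_nf
  linarith [Nat.zero_le r, Nat.zero_le (r^2), Nat.zero_le (r^3), Nat.zero_le (r^4), Nat.zero_le (r^5)]
lemma arith3 (q : ℕ) (h : 2 ≤ q) :
    2*((q+1)*((q^2+q+1)*q^2)) ≤ 6*q^5+12*q^4+8*q^3+4*q^2 := by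
  obtain ⟨r, rfl⟩ : ∃ r, q = r + 2 := ⟨q - 2, by omega⟩
  ring_nf
  linarith [Nat.zero_le r, Nat.zero_le (r^2), Nat.zero_le (r^3), Nat.zero_le (r^4), Nat.zero_le (r^5)]

lemma Yb_bound (q : ℕ) {F : Type} [Field F] [Fintype F]
    (hq : Fintype.card F = q) (hq2 : 2 ≤ q)
    (M : Set (Chamber4 F)) (hind : Indep4 M)
    (S₀ : Submodule F (Fin 5 → F)) (hS₀r : finrank F S₀ = 4)
    (σ : Submodule F (Fin 5 → F)) (hσ : finrank F σ = 3) (hσS : σ ≤ S₀)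
    (Yb : Set (Chamber4 F))
    (hYbM : ∀ C ∈ Yb, C ∈ M)
    (hYbw : ∀ C ∈ Yb, weight4 M C.line C.plane ≤ 2)
    (hYbσ : ∀ C ∈ Yb, C.pt ≤ σ)
    (hYbl : ∀ C ∈ Yb, C.line ≤ S₀)
    (hYbp : ∀ C ∈ Yb, ¬ C.plane ≤ S₀)
    (hYbip : ∀ C ∈ Yb, C.plane ⊓ S₀ = C.line)
    (hYbs : ∀ C ∈ Yb, ¬ σ ≤ C.solid) :
    Yb.ncard ≤ 2*((q+1)*((q^2+q+1)*q^2)) + 2*(2*((q+1)*(q^2*q^2))) := by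
  classical
  set K₁ := 2*((q+1)*((q^2+q+1)*q^2)) with hK₁
  set K₂ := 2*((q+1)*(q^2*q^2)) with hK₂
  set B := (Set.toFinite Yb).toFinset with hB
  have hmemB : ∀ C, C ∈ B ↔ C ∈ Yb := fun C => Set.Finite.mem_toFinset _
  have hYbB : Yb.ncard = B.card := Set.ncard_eq_toFinset_card _ _
  -- Step 1 : non-skew neighbours
  have step1 : ∀ C ∈ B, (B.filter (fun C' => ¬ (C.line ⊓ C'.line = ⊥))).card ≤ K₁ := by
    intro C hCB
    have hCYb : C ∈ Yb := (hmemB C).1 hCB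
    have hcard : (B.filter (fun C' => ¬ (C.line ⊓ C'.line = ⊥))).card
        = {a | a ∈ Yb ∧ ¬ (C.line ⊓ a.line = ⊥)}.ncard := by
      rw [hB]; exact filter_card_eq_ncard _ _
    rw [hcard, hK₁]
    set pc : Chamber4 F → Submodule F (Fin 5 → F) := fun C' =>
      if h : C.line ⊓ C'.line = ⊥ then ⊥ else (exists_point_rank1 h).choose with hpc
    refine chamber_count3 _ (fun C' hC' => ⟨hYbM C' hC'.1, hYbw C' hC'.1⟩) pc
      (fun a => a ≤ C.line ∧ finrank F a = 1)
      (fun a b => a ≤ b ∧ b ≤ S₀ ∧ finrank F b = 2)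
      (fun a b c => b ≤ c ∧ ¬ c ≤ S₀ ∧ finrank F c = 3) ?_ _ _ _ ?_ ?_ ?_
    · rintro C' ⟨hC'Yb, hns⟩
      have hd : pc C' = (exists_point_rank1 hns).choose := dif_neg hns
      obtain ⟨hle, hfr⟩ := (exists_point_rank1 hns).choose_spec
      have h1 : pc C' ≤ C.line ⊓ C'.line := by rw [hd]; exact hle
      have h2 : finrank F ↥(pc C') = 1 := by rw [hd]; exact hfr
      exact ⟨⟨h1.trans inf_le_left, h2⟩,
        ⟨h1.trans inf_le_right, hYbl C' hC'Yb, C'.dim_line⟩,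
        ⟨C'.le_line_plane, hYbp C' hC'Yb, C'.dim_plane⟩⟩
    · exact le_of_eq (w_pts2 q hq hq2 C.dim_line)
    · rintro a ⟨haC, ha1⟩
      exact le_of_eq (w_lines_over_in4 q hq hq2 ha1 (haC.trans (hYbl C hCYb)) hS₀r)
    · rintro a b _ ⟨_, hbS, hb2⟩
      exact le_of_eq (w_planes_over_notin q hq hq2 hb2 hbS hS₀r)
  -- Step 2 : in-degree bound
  have step2 : ∀ C' ∈ B,
      (B.filter (fun C => (C.line ⊓ C'.line = ⊥) ∧ C.pt ≤ C'.solid)).card ≤ K₂ := by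
    intro C' hC'B
    have hC'Yb : C' ∈ Yb := (hmemB C').1 hC'B
    have hm' : finrank F ↥(σ ⊓ C'.solid) = 2 := inf_rank2 hσ C'.dim_solid (hYbs C' hC'Yb)
    have hcard : (B.filter (fun C => (C.line ⊓ C'.line = ⊥) ∧ C.pt ≤ C'.solid)).card
        = {a | a ∈ Yb ∧ ((a.line ⊓ C'.line = ⊥) ∧ a.pt ≤ C'.solid)}.ncard := by
      rw [hB]; exact filter_card_eq_ncard _ _
    rw [hcard, hK₂]
    refine chamber_count3 _ (fun C hC => ⟨hYbM C hC.1, hYbw C hC.1⟩) (fun C => C.pt)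
      (fun a => a ≤ σ ⊓ C'.solid ∧ finrank F a = 1)
      (fun a b => a ≤ b ∧ b ≤ S₀ ∧ finrank F b = 2 ∧ b ⊓ C'.line = ⊥)
      (fun a b c => b ≤ c ∧ ¬ c ≤ S₀ ∧ finrank F c = 3) ?_ _ _ _ ?_ ?_ ?_
    · rintro C ⟨hCYb, hskew, hpt⟩
      exact ⟨⟨le_inf (hYbσ C hCYb) hpt, C.dim_pt⟩,
        ⟨C.le_pt_line, hYbl C hCYb, C.dim_line, hskew⟩,
        ⟨C.le_line_plane, hYbp C hCYb, C.dim_plane⟩⟩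
    · exact le_of_eq (w_pts2 q hq hq2 hm')
    · rintro a ⟨ham, ha1⟩
      exact cnt_skew q hq hq2 hS₀r C'.dim_line (hYbl C' hC'Yb) ha1
        (ham.trans (inf_le_left.trans hσS))
    · rintro a b _ ⟨_, hbS, hb2, _⟩
      exact le_of_eq (w_planes_over_notin q hq hq2 hb2 hbS hS₀r)
  -- Step 3 : double counting
  have key3 : B.card * B.card ≤ B.card * (K₁ + 2 * K₂) := by
    set A := (B ×ˢ B).filter (fun p => p.1.line ⊓ p.2.line = ⊥) with hA
    set N := (B ×ˢ B).filter (fun p => ¬ (p.1.line ⊓ p.2.line = ⊥)) with hN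
    have hsplitAN : A.card + N.card = B.card * B.card := by
      rw [hA, hN, Finset.card_filter_add_card_filter_not, Finset.card_product]
    have hNle : N.card ≤ K₁ * B.card := by
      refine Finset.card_le_mul_card_image_of_maps_to (f := Prod.fst) ?_ K₁ ?_
      · intro p hp
        rw [hN, Finset.mem_filter] at hp
        exact (Finset.mem_product.1 hp.1).1
      · intro C hCB
        refine le_trans (Finset.card_le_card_of_injOn Prod.snd ?_ ?_) (step1 C hCB)
        · intro p hp
          simp only [Finset.mem_coe, Finset.mem_filter] at hp
          obtain ⟨hpN, hp1⟩ := hp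
          rw [hN, Finset.mem_filter] at hpN
          obtain ⟨hpB, hns⟩ := hpN
          rw [Finset.mem_coe, Finset.mem_filter]
          refine ⟨(Finset.mem_product.1 hpB).2, ?_⟩
          rw [← hp1]; exact hns
        · rintro p hp r hr h2
          simp only [Finset.mem_coe, Finset.mem_filter] at hp hr
          exact Prod.ext (hp.2.trans hr.2.symm) h2
    have hAle : A.card ≤ 2 * (K₂ * B.card) := by
      set E := A.filter (fun p => p.1.pt ≤ p.2.solid) with hE
      have hsub : A ⊆ E ∪ E.image Prod.swap := by
        intro p hpA
        by_cases hpe : p.1.pt ≤ p.2.solid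
        · exact Finset.mem_union_left _ (Finset.mem_filter.2 ⟨hpA, hpe⟩)
        · have hpA' := hpA
          rw [hA, Finset.mem_filter] at hpA'
          obtain ⟨hpB, hskew⟩ := hpA'
          obtain ⟨h1, h2⟩ := Finset.mem_product.1 hpB
          have hC1 : p.1 ∈ Yb := (hmemB p.1).1 h1
          have hC2 : p.2 ∈ Yb := (hmemB p.2).1 h2
          have hnopp := hind p.1 (hYbM _ hC1) p.2 (hYbM _ hC2)
          have hf1 : p.1.line ⊓ p.2.plane = ⊥ := by
            rw [eq_bot_iff]
            intro x hx
            have hx2 : x ∈ p.1.line ⊓ p.2.line := by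
              refine ⟨hx.1, ?_⟩
              rw [← hYbip p.2 hC2]
              exact ⟨hx.2, hYbl p.1 hC1 hx.1⟩
            rwa [hskew] at hx2
          have hf2 : p.2.line ⊓ p.1.plane = ⊥ := by
            rw [eq_bot_iff]
            intro x hx
            have hx2 : x ∈ p.1.line ⊓ p.2.line := by
              refine ⟨?_, hx.1⟩
              rw [← hYbip p.1 hC1]
              exact ⟨hx.2, hYbl p.2 hC2 hx.1⟩
            rwa [hskew] at hx2
          have hor : p.1.pt ⊓ p.2.solid ≠ ⊥ ∨ p.2.pt ⊓ p.1.solid ≠ ⊥ := by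
            by_contra hcon
            push_neg at hcon
            exact hnopp ⟨hcon.1, hcon.2, hf1, hf2⟩
          rcases hor with h | h
          · exact absurd (rank1_le p.1.dim_pt h) hpe
          · refine Finset.mem_union_right _ (Finset.mem_image.2 ⟨p.swap, ?_, Prod.swap_swap p⟩)
            rw [hE, Finset.mem_filter]
            refine ⟨?_, rank1_le p.2.dim_pt h⟩
            rw [hA, Finset.mem_filter]
            refine ⟨Finset.mem_product.2 ⟨h2, h1⟩, ?_⟩
            show p.2.line ⊓ p.1.line = ⊥
            rw [inf_comm]
            exact hskew
      have hcardsub : A.card ≤ E.card + E.card := by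
        refine le_trans (Finset.card_le_card hsub) ?_
        refine le_trans (Finset.card_union_le _ _) ?_
        have himg := Finset.card_image_le (s := E) (f := Prod.swap)
        omega
      have hEle : E.card ≤ K₂ * B.card := by
        refine Finset.card_le_mul_card_image_of_maps_to (f := Prod.snd) ?_ K₂ ?_
        · intro p hp
          rw [hE, Finset.mem_filter, hA, Finset.mem_filter] at hp
          exact (Finset.mem_product.1 hp.1.1).2
        · intro C' hC'B
          refine le_trans (Finset.card_le_card_of_injOn Prod.fst ?_ ?_) (step2 C' hC'B)
          · intro p hp
            simp only [Finset.mem_coe, Finset.mem_filter] at hp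
            obtain ⟨hpE, hp2⟩ := hp
            rw [hE, Finset.mem_filter] at hpE
            obtain ⟨hpA, hpe⟩ := hpE
            rw [hA, Finset.mem_filter] at hpA
            obtain ⟨hpB, hskew⟩ := hpA
            rw [Finset.mem_coe, Finset.mem_filter]
            refine ⟨(Finset.mem_product.1 hpB).1, ?_, ?_⟩
            · rw [← hp2]; exact hskew
            · rw [← hp2]; exact hpe
          · rintro p hp r hr h2
            simp only [Finset.mem_coe, Finset.mem_filter] at hp hr
            exact Prod.ext h2 (hp.2.trans hr.2.symm)
      omega
    calc B.card * B.card = A.card + N.card := hsplitAN.symm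
      _ ≤ 2 * (K₂ * B.card) + K₁ * B.card := Nat.add_le_add hAle hNle
      _ = B.card * (K₁ + 2 * K₂) := by ring
  rw [hYbB]
  rcases Nat.eq_zero_or_pos B.card with h0 | hpos
  · omega
  · exact Nat.le_of_mul_le_mul_left key3 hpos

/-- In Case A, for a plane `σ`, the set `Y` of chambers of `M` whose coflag has
`M`-weight at most two and whose point lies in `σ` satisfies
`|Y| ≤ 6q⁵+12q⁴+8q³+4q²`. -/
theorem statement_17 (q : ℕ) (F : Type) [Field F] [Fintype F]
    (hq : Fintype.card F = q) (M : Set (Chamber4 F)) (hM : MaxIndep4 M)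
    (hA : CaseA q M) (σ : Submodule F (Fin 5 → F)) (hσ : Module.finrank F ↥σ = 3) :
    Set.ncard {C | C ∈ M ∧ weight4 M C.line C.plane ≤ 2 ∧ C.pt ≤ σ} ≤
      6*q^5+12*q^4+8*q^3+4*q^2 := by
  classical
  have hq2 : 2 ≤ q := by
    have := Fintype.one_lt_card (α := F)
    omega
  set Y : Set (Chamber4 F) := {C | C ∈ M ∧ weight4 M C.line C.plane ≤ 2 ∧ C.pt ≤ σ}
    with hYdef
  have hwlt : ∀ C ∈ Y, weight4 M C.line C.plane < (q+1)^2 := by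
    intro C hC
    have h9 : 3 ^ 2 ≤ (q + 1) ^ 2 := Nat.pow_le_pow_left (by omega) 2
    have := hC.2.1
    omega
  rcases hA with ⟨P₀, hP₀r, _, hlow⟩ | ⟨S₀, hS₀r, _, hlow⟩
  · -- Case A1
    have hkey : ∀ C ∈ Y, ¬ P₀ ≤ C.line ∧ C.plane = C.line ⊔ P₀ := by
      intro C hC
      obtain ⟨h1, h2⟩ := hlow C.line C.plane ⟨C, hC.1, rfl, rfl⟩ (hwlt C hC)
      have hbot : C.line ⊓ P₀ = ⊥ := by
        rcases lt_or_eq_of_le (inf_le_right : C.line ⊓ P₀ ≤ P₀) with hlt | heq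
        · exact eq_bot_of_lt_rank1 hlt hP₀r
        · exact absurd (by rw [← heq]; exact inf_le_left) h2
      have hfr : finrank F ↥(C.line ⊔ P₀) = 3 := by
        have h3 := Submodule.finrank_sup_add_finrank_inf_eq C.line P₀
        rw [hbot, finrank_bot, C.dim_line, hP₀r] at h3
        omega
      refine ⟨h2, (Submodule.eq_of_le_of_finrank_le (sup_le C.le_line_plane h1) ?_).symm⟩
      rw [C.dim_plane, hfr]
    have hYle : Y.ncard ≤ 2 * ((q^2+q+1) * (q^3+q^2+q+1)) := by
      set T := {p : Submodule F (Fin 5 → F) × Submodule F (Fin 5 → F) |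
        (p.1 ≤ σ ∧ finrank F p.1 = 1) ∧ (p.1 ≤ p.2 ∧ finrank F p.2 = 2)} with hT
      have h1 : Y.ncard ≤ 2 * T.ncard := by
        refine ncard_le_mul_of_mapsTo (fun C => (C.pt, C.line)) ?_ 2 ?_
        · intro C hC
          exact ⟨⟨hC.2.2, C.dim_pt⟩, C.le_pt_line, C.dim_line⟩
        · intro b
          show {a | a ∈ Y ∧ (a.pt, a.line) = b}.ncard ≤ 2
          rcases Set.eq_empty_or_nonempty {a | a ∈ Y ∧ (a.pt, a.line) = b}
            with he | ⟨C₀, hC₀⟩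
          · rw [he, Set.ncard_empty]; omega
          · have hb2 : C₀.line = b.2 := by rw [← hC₀.2]
            have hsub : {a | a ∈ Y ∧ (a.pt, a.line) = b}
                ⊆ {D | D ∈ M ∧ D.line = b.2 ∧ D.plane = b.2 ⊔ P₀} := by
              rintro D ⟨hDs, hDb⟩
              have hDl : D.line = b.2 := by rw [← hDb]
              refine ⟨hDs.1, hDl, ?_⟩
              rw [(hkey D hDs).2, hDl]
            have hle := Set.ncard_le_ncard hsub (Set.toFinite _)
            have hwt : Set.ncard {D | D ∈ M ∧ D.line = b.2 ∧ D.plane = b.2 ⊔ P₀} ≤ 2 := by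
              have h2 := hC₀.1.2.1
              have hpl : C₀.plane = b.2 ⊔ P₀ := by rw [(hkey C₀ hC₀.1).2, hb2]
              rw [hb2, hpl] at h2
              exact h2
            exact le_trans hle hwt
      have h2 : T.ncard ≤ (q^2+q+1) * (q^3+q^2+q+1) := by
        refine ncard_pair_le T (fun a => a ≤ σ ∧ finrank F a = 1)
          (fun a b => a ≤ b ∧ finrank F b = 2) (fun p hp => hp) _ _ ?_ ?_
        · exact le_of_eq (w_pts3 q hq hq2 hσ)
        · rintro a ⟨_, ha1⟩
          exact le_of_eq (w_lines_over_top q hq hq2 ha1)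
      calc Y.ncard ≤ 2 * T.ncard := h1
        _ ≤ 2 * ((q^2+q+1) * (q^3+q^2+q+1)) := Nat.mul_le_mul_left 2 h2
    exact le_trans hYle (arith1 q hq2)
  · -- Case A2
    have hbasic : ∀ C ∈ Y, C.line ≤ S₀ ∧ ¬ C.plane ≤ S₀ := by
      intro C hC
      exact hlow C.line C.plane ⟨C, hC.1, rfl, rfl⟩ (hwlt C hC)
    have hinfp : ∀ C ∈ Y, C.plane ⊓ S₀ = C.line := fun C hC =>
      A2_inf_plane C (hbasic C hC).1 (hbasic C hC).2
    by_cases hσS : σ ≤ S₀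
    · -- hard subcase : σ ≤ S₀
      set Ys := {C | C ∈ Y ∧ σ ≤ C.solid} with hYs
      set Yb := {C | C ∈ Y ∧ ¬ σ ≤ C.solid} with hYb
      have hsplit : Y.ncard ≤ Ys.ncard + Yb.ncard := by
        refine le_trans (Set.ncard_le_ncard (fun C hC => ?_) (Set.toFinite (Ys ∪ Yb)))
          (Set.ncard_union_le _ _)
        by_cases h : σ ≤ C.solid
        · exact Set.mem_union_left _ ⟨hC, h⟩
        · exact Set.mem_union_right _ ⟨hC, h⟩
      have hYsle : Ys.ncard ≤ 2 * ((q^2+q+1) * q^2) := by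
        refine chamber_count2 Ys (fun C hC => ⟨hC.1.1, hC.1.2.1⟩)
          (fun b => b ≤ σ ∧ finrank F b = 2)
          (fun b c => b ≤ c ∧ ¬ c ≤ S₀ ∧ finrank F c = 3) ?_ _ _ ?_ ?_
        · intro C hC
          have hfrsup : finrank F ↥(C.plane ⊔ σ) ≤ 4 := by
            have h1 := Submodule.finrank_mono (sup_le C.le_plane_solid hC.2)
            rwa [C.dim_solid] at h1
          have hform := Submodule.finrank_sup_add_finrank_inf_eq C.plane σ
          rw [C.dim_plane, hσ] at hform
          have hle2 : C.plane ⊓ σ ≤ C.line := by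
            rw [← hinfp C hC.1]
            exact le_inf inf_le_left (le_trans inf_le_right hσS)
          have heqσ : C.plane ⊓ σ = C.line :=
            Submodule.eq_of_le_of_finrank_le hle2 (by rw [C.dim_line]; omega)
          have hl : C.line ≤ σ := by rw [← heqσ]; exact inf_le_right
          exact ⟨⟨hl, C.dim_line⟩, C.le_line_plane, (hbasic C hC.1).2, C.dim_plane⟩
        · exact le_of_eq (cnt_lines_rank3 q hq hq2 σ hσ)
        · rintro b ⟨hbσ, hb2⟩
          exact le_of_eq (w_planes_over_notin q hq hq2 hb2 (hbσ.trans hσS) hS₀r)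
      have hYble : Yb.ncard ≤ 2*((q+1)*((q^2+q+1)*q^2)) + 2*(2*((q+1)*(q^2*q^2))) := by
        refine Yb_bound q hq hq2 M hM.1 S₀ hS₀r σ hσ hσS Yb
          (fun C hC => hC.1.1) (fun C hC => hC.1.2.1) (fun C hC => hC.1.2.2)
          (fun C hC => (hbasic C hC.1).1) (fun C hC => (hbasic C hC.1).2)
          (fun C hC => hinfp C hC.1) (fun C hC => hC.2)
      calc Y.ncard ≤ Ys.ncard + Yb.ncard := hsplit
        _ ≤ 2 * ((q^2+q+1) * q^2)
            + (2*((q+1)*((q^2+q+1)*q^2)) + 2*(2*((q+1)*(q^2*q^2)))) :=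
          Nat.add_le_add hYsle hYble
        _ ≤ 6*q^5+12*q^4+8*q^3+4*q^2 := arith2 q hq2
    · -- easy subcase : ¬ σ ≤ S₀
      have hτ : finrank F ↥(σ ⊓ S₀) = 2 := inf_rank2 hσ hS₀r hσS
      have hYble : Y.ncard ≤ 2 * ((q+1) * ((q^2+q+1) * q^2)) := by
        refine chamber_count3 Y (fun C hC => ⟨hC.1, hC.2.1⟩) (fun C => C.pt)
          (fun a => a ≤ σ ⊓ S₀ ∧ finrank F a = 1)
          (fun a b => a ≤ b ∧ b ≤ S₀ ∧ finrank F b = 2)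
          (fun a b c => b ≤ c ∧ ¬ c ≤ S₀ ∧ finrank F c = 3) ?_ _ _ _ ?_ ?_ ?_
        · intro C hC
          exact ⟨⟨le_inf hC.2.2 (C.le_pt_line.trans (hbasic C hC).1), C.dim_pt⟩,
            ⟨C.le_pt_line, (hbasic C hC).1, C.dim_line⟩,
            ⟨C.le_line_plane, (hbasic C hC).2, C.dim_plane⟩⟩
        · exact le_of_eq (w_pts2 q hq hq2 hτ)
        · rintro a ⟨haτ, ha1⟩
          exact le_of_eq (w_lines_over_in4 q hq hq2 ha1 (haτ.trans inf_le_right) hS₀r)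
        · rintro a b _ ⟨_, hbS, hb2⟩
          exact le_of_eq (w_planes_over_notin q hq hq2 hb2 hbS hS₀r)
      exact le_trans hYble (arith3 q hq2)
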